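/- For L > 0 and 0 < a ≤ b, the identity ∫_0^L si(ax)·si(bx) dx = π/(2b) + si(aL)·si(bL)·L - ((b-a)/(2ab))·si((b-a)L) - ((b+a)/(2ab))·si((b+a)L) + (cos(aL)/a)·si(bL) + (cos(bL)/b)·si(aL) holds, where si(x) = -∫_x^∞ (sin t)/t dt and si(0) = π/2. -/

import Mathlib

open Real Filter MeasureTheory Set intervalIntegral

lemma sinc_ii (c d : ℝ) : IntervalIntegrable (fun t => Real.sin t / t) volume c d := by
  rw [intervalIntegrable_iff]
  refine Integrable.mono' (g := fun _ => (1:ℝ)) (integrableOn_const measure_Ioc_lt_top.ne)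
    ((Real.measurable_sin.div measurable_id).aestronglyMeasurable) (ae_of_all _ fun t => ?_)
  rcases eq_or_ne t 0 with h | h
  · simp [h]
  · rw [norm_div, Real.norm_eq_abs, Real.norm_eq_abs]
    exact div_le_one_of_le₀ Real.abs_sin_le_abs (abs_nonneg _)

lemma exp_sin_anti (s : ℝ) (hs : 0 < s) (t : ℝ) :
    HasDerivAt (fun t => -Real.exp (-(s*t)) * (s * Real.sin t + Real.cos t) / (1 + s^2))
      (Real.exp (-(s*t)) * Real.sin t) t := by
  have h1 : HasDerivAt (fun t => Real.exp (-(s*t))) (-s * Real.exp (-(s*t))) t := by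
    have := (Real.hasDerivAt_exp (-(s*t))).comp t (((hasDerivAt_id t).const_mul s).neg)
    simpa [mul_comm, Function.comp_def, Pi.neg_def] using this
  have h2 : HasDerivAt (fun t => s * Real.sin t + Real.cos t)
      (s * Real.cos t - Real.sin t) t :=
    ((Real.hasDerivAt_sin t).const_mul s).add (Real.hasDerivAt_cos t)
  have h3 := ((h1.neg.mul h2).div_const (1 + s^2))
  refine h3.congr_deriv (Eq.symm ?_)
  simp only [Pi.neg_apply]
  have hne : 1 + s^2 ≠ 0 := by positivity
  field_simp
  ring

lemma exp_cont_ii (s L : ℝ) : IntervalIntegrable (fun t => Real.exp (-(s*t)) * Real.sin t) volume 0 L :=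
  (Continuous.mul (Real.continuous_exp.comp (continuous_const.mul continuous_id).neg)
    Real.continuous_sin).intervalIntegrable 0 L

lemma inner_t (s L : ℝ) (hs : 0 < s) (hL : 0 ≤ L) :
    ∫ t in Set.Ioc (0:ℝ) L, Real.exp (-(s*t)) * Real.sin t
      = (1 - Real.exp (-(s*L)) * (Real.cos L + s * Real.sin L)) / (1 + s^2) := by
  rw [← intervalIntegral.integral_of_le hL,
    intervalIntegral.integral_eq_sub_of_hasDerivAt (fun t _ => exp_sin_anti s hs t)
      (exp_cont_ii s L)]
  have hne : (1 + s^2) ≠ 0 := by positivity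
  simp only [mul_zero, neg_zero, Real.exp_zero, Real.sin_zero, Real.cos_zero]
  ring

lemma inner_s (t : ℝ) (ht : 0 < t) :
    ∫ s in Set.Ioi (0:ℝ), Real.exp (-(s*t)) = 1 / t := by
  have hderiv : ∀ s ∈ Set.Ici (0:ℝ), HasDerivAt (fun s => -Real.exp (-(s*t)) / t)
      (Real.exp (-(s*t))) s := by
    intro s _
    have h1 : HasDerivAt (fun s => Real.exp (-(s*t))) (-t * Real.exp (-(s*t))) s := by
      have := (Real.hasDerivAt_exp (-(s*t))).comp s
        (((hasDerivAt_id s).mul_const t).neg)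
      simpa [mul_comm, Function.comp_def, Pi.neg_def] using this
    refine (h1.neg.div_const t).congr_deriv (Eq.symm ?_)
    field_simp
  have hint : IntegrableOn (fun s => Real.exp (-(s*t))) (Set.Ioi (0:ℝ)) := by
    have := exp_neg_integrableOn_Ioi (0:ℝ) ht
    refine this.congr_fun (fun s _ => by ring_nf) measurableSet_Ioi
  have htend : Tendsto (fun s => -Real.exp (-(s*t)) / t) atTop (nhds 0) := by
    have : Tendsto (fun s : ℝ => Real.exp (-(s*t))) atTop (nhds 0) := by
      have := Real.tendsto_exp_neg_atTop_nhds_zero.comp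
        (Tendsto.atTop_mul_const ht (tendsto_id (α := ℝ)))
      simpa [Function.comp_def] using this
    simpa using (this.neg.div_const t)
  rw [integral_Ioi_of_hasDerivAt_of_tendsto' hderiv hint htend]
  rw [zero_mul, neg_zero, Real.exp_zero]
  ring

lemma fubini_step (L : ℝ) (hL : 0 < L) :
    ∫ t in (0:ℝ)..L, Real.sin t / t
      = ∫ s in Set.Ioi (0:ℝ),
          (1 - Real.exp (-(s*L)) * (Real.cos L + s * Real.sin L)) / (1 + s^2) := by
  set μ := volume.restrict (Set.Ioi (0:ℝ))
  set ν := volume.restrict (Set.Ioc (0:ℝ) L)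
  have hcont : Continuous (fun p : ℝ × ℝ => Real.exp (-(p.1 * p.2)) * Real.sin p.2) := by
    fun_prop
  have hmeas : AEStronglyMeasurable (fun p : ℝ × ℝ => Real.exp (-(p.1 * p.2)) * Real.sin p.2)
      (μ.prod ν) := hcont.aestronglyMeasurable
  have hInt : Integrable (Function.uncurry fun s t => Real.exp (-(s*t)) * Real.sin t)
      (μ.prod ν) := by
    rw [Function.uncurry_def]
    rw [integrable_prod_iff' hmeas]
    constructor
    · filter_upwards [ae_restrict_mem measurableSet_Ioc] with t ht
      have ht0 : 0 < t := ht.1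
      have : IntegrableOn (fun s => Real.exp (-(s*t))) (Set.Ioi (0:ℝ)) :=
        (exp_neg_integrableOn_Ioi (0:ℝ) ht0).congr_fun (fun s _ => by ring_nf) measurableSet_Ioi
      exact this.mul_const (Real.sin t)
    · refine Integrable.mono' (g := fun _ => (1:ℝ))
        (integrableOn_const measure_Ioc_lt_top.ne) ?_ ?_
      · have hm2 : AEStronglyMeasurable
            (fun p : ℝ × ℝ => ‖Real.exp (-(p.2 * p.1)) * Real.sin p.1‖) (ν.prod μ) := by
          apply Continuous.aestronglyMeasurable; fun_prop
        exact hm2.integral_prod_right'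
      · filter_upwards [ae_restrict_mem measurableSet_Ioc] with t ht
        have ht0 : 0 < t := ht.1
        have hcalc : ∫ s, ‖Real.exp (-(s*t)) * Real.sin t‖ ∂μ = |Real.sin t| / t := by
          have : ∀ s : ℝ, ‖Real.exp (-(s*t)) * Real.sin t‖
              = Real.exp (-(s*t)) * |Real.sin t| := by
            intro s
            rw [norm_mul, Real.norm_eq_abs, Real.norm_eq_abs, abs_of_pos (Real.exp_pos _)]
          simp_rw [this]
          rw [MeasureTheory.integral_mul_const, inner_s t ht0]
          ring
        rw [Real.norm_eq_abs, hcalc, abs_of_nonneg (by positivity)]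
        rw [div_le_one ht0]
        calc |Real.sin t| ≤ |t| := Real.abs_sin_le_abs
          _ = t := abs_of_pos ht0
  have hswap := MeasureTheory.integral_integral_swap
    (f := fun s t => Real.exp (-(s*t)) * Real.sin t) hInt
  -- LHS of hswap : ∫ s ∂μ, ∫ t ∂ν, ... ; RHS : ∫ t ∂ν, ∫ s ∂μ, ...
  have hleft : (∫ s, ∫ t, Real.exp (-(s*t)) * Real.sin t ∂ν ∂μ)
      = ∫ s in Set.Ioi (0:ℝ),
          (1 - Real.exp (-(s*L)) * (Real.cos L + s * Real.sin L)) / (1 + s^2) := by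
    refine setIntegral_congr_fun measurableSet_Ioi (fun s hs => ?_)
    exact inner_t s L hs hL.le
  have hright : (∫ t, ∫ s, Real.exp (-(s*t)) * Real.sin t ∂μ ∂ν)
      = ∫ t in (0:ℝ)..L, Real.sin t / t := by
    rw [intervalIntegral.integral_of_le hL.le]
    refine setIntegral_congr_fun measurableSet_Ioc (fun t ht => ?_)
    rw [MeasureTheory.integral_mul_const, inner_s t ht.1]
    ring
  rw [← hleft, hswap, hright]

lemma dirichlet : Tendsto (fun L => ∫ t in (0:ℝ)..L, Real.sin t / t) atTop (nhds (π/2)) := by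
  have hval : ∫ s in Set.Ioi (0:ℝ), (1 + s^2)⁻¹ = π/2 := by
    rw [integral_Ioi_inv_one_add_sq]; simp
  have key : Tendsto (fun L => ∫ s in Set.Ioi (0:ℝ),
      (1 - Real.exp (-(s*L)) * (Real.cos L + s * Real.sin L)) / (1 + s^2)) atTop
      (nhds (π/2)) := by
    rw [← hval]
    refine tendsto_integral_filter_of_dominated_convergence
      (fun s => (1 + s^2)⁻¹ + 2 * Real.exp (-(2⁻¹*s))) ?_ ?_ ?_ ?_
    · refine Eventually.of_forall (fun L => ?_)
      apply Continuous.aestronglyMeasurable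
      exact Continuous.div (by fun_prop) (by fun_prop) (fun s => by positivity)
    · filter_upwards [eventually_ge_atTop (1:ℝ)] with L hL
      filter_upwards [ae_restrict_mem measurableSet_Ioi] with s hs
      have hs0 : (0:ℝ) < s := hs
      have hd : (0:ℝ) < 1 + s^2 := by positivity
      have h1 : |1 - Real.exp (-(s*L)) * (Real.cos L + s * Real.sin L)|
          ≤ 1 + (1+s) * Real.exp (-(s*L)) := by
        calc |1 - Real.exp (-(s*L)) * (Real.cos L + s * Real.sin L)|
            ≤ |(1:ℝ)| + |Real.exp (-(s*L)) * (Real.cos L + s * Real.sin L)| :=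
              abs_sub _ _
          _ ≤ 1 + (1+s) * Real.exp (-(s*L)) := by
              rw [abs_one, abs_mul, abs_of_pos (Real.exp_pos _)]
              have hc : |Real.cos L + s * Real.sin L| ≤ 1 + s := by
                calc |Real.cos L + s * Real.sin L| ≤ |Real.cos L| + |s * Real.sin L| :=
                      abs_add_le _ _
                  _ ≤ 1 + s := by
                      rw [abs_mul, abs_of_pos hs0]
                      have := Real.abs_cos_le_one L
                      have h2 := Real.abs_sin_le_one L
                      nlinarith
              nlinarith [Real.exp_pos (-(s*L)), abs_nonneg (Real.cos L + s * Real.sin L)]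
      have h2 : (1+s) * Real.exp (-(s*L)) ≤ 2 * Real.exp (-(2⁻¹*s)) := by
        have hexp : Real.exp (-(s*L)) ≤ Real.exp (-s) := by
          apply Real.exp_le_exp.2; nlinarith
        have h3 : 1 + s ≤ 2 * Real.exp (2⁻¹*s) := by
          have := Real.add_one_le_exp (2⁻¹*s)
          nlinarith
        calc (1+s) * Real.exp (-(s*L)) ≤ (2 * Real.exp (2⁻¹*s)) * Real.exp (-s) := by
              apply mul_le_mul h3 hexp (Real.exp_pos _).le (by positivity)
          _ = 2 * Real.exp (-(2⁻¹*s)) := by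
              rw [mul_assoc, ← Real.exp_add]; ring_nf
      rw [norm_div, Real.norm_eq_abs, Real.norm_eq_abs, abs_of_pos hd]
      calc |1 - Real.exp (-(s*L)) * (Real.cos L + s * Real.sin L)| / (1 + s^2)
          ≤ (1 + (1+s) * Real.exp (-(s*L))) / (1 + s^2) := by gcongr
        _ = 1/(1+s^2) + ((1+s) * Real.exp (-(s*L)))/(1+s^2) := by ring
        _ ≤ (1 + s^2)⁻¹ + 2 * Real.exp (-(2⁻¹*s)) := by
            rw [one_div]
            gcongr
            calc ((1+s) * Real.exp (-(s*L)))/(1+s^2) ≤ (1+s) * Real.exp (-(s*L)) :=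
                  div_le_self (by positivity) (by nlinarith)
              _ ≤ 2 * Real.exp (-(2⁻¹*s)) := h2
    · refine Integrable.add integrable_inv_one_add_sq.integrableOn ?_
      have := (exp_neg_integrableOn_Ioi (0:ℝ) (by norm_num : (0:ℝ) < 2⁻¹))
      exact (this.congr_fun (fun s _ => by ring_nf) measurableSet_Ioi).const_mul 2
    · filter_upwards [ae_restrict_mem measurableSet_Ioi] with s hs
      have hs0 : (0:ℝ) < s := hs
      have h0 : Tendsto (fun L => Real.exp (-(s*L)) * (Real.cos L + s * Real.sin L))
          atTop (nhds 0) := by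
        rw [tendsto_zero_iff_norm_tendsto_zero]
        refine squeeze_zero (g := fun L => (1+s) * Real.exp (-(s*L)))
          (fun L => norm_nonneg _) (fun L => ?_) ?_
        · rw [Real.norm_eq_abs, abs_mul, abs_of_pos (Real.exp_pos _), mul_comm]
          apply mul_le_mul_of_nonneg_right ?_ (Real.exp_pos _).le
          calc |Real.cos L + s * Real.sin L| ≤ |Real.cos L| + |s * Real.sin L| := abs_add_le _ _
            _ ≤ 1 + s := by
                rw [abs_mul, abs_of_pos hs0]
                have := Real.abs_cos_le_one L
                have h2 := Real.abs_sin_le_one L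
                nlinarith
        · have : Tendsto (fun L : ℝ => Real.exp (-(s*L))) atTop (nhds 0) := by
            have := Real.tendsto_exp_neg_atTop_nhds_zero.comp
              (Tendsto.const_mul_atTop hs0 (tendsto_id (α := ℝ)))
            simpa [Function.comp_def] using this
          simpa using this.const_mul (1+s)
      have := (tendsto_const_nhds (x := (1:ℝ)) (f := atTop)).sub h0
      have := this.div_const (1 + s^2)
      simpa using this
  refine key.congr' ?_
  filter_upwards [eventually_gt_atTop (0:ℝ)] with L hL
  exact (fubini_step L hL).symm

noncomputable def hh (x : ℝ) : ℝ := (∫ t in (0:ℝ)..x, Real.sin t / t) - π/2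

lemma hh_cont : Continuous hh :=
  (intervalIntegral.continuous_primitive (fun c d => sinc_ii c d) 0).sub continuous_const

lemma hh_deriv {x : ℝ} (hx : x ≠ 0) : HasDerivAt hh (Real.sin x / x) x := by
  have h1 : HasDerivAt (fun y => ∫ t in (0:ℝ)..y, Real.sin t / t) (Real.sin x / x) x := by
    refine intervalIntegral.integral_hasDerivAt_right (sinc_ii 0 x)
      ⟨Set.univ, Filter.univ_mem,
        ((Real.measurable_sin.div measurable_id).aestronglyMeasurable).restrict⟩ ?_
    exact (Real.continuous_sin.continuousAt).div continuousAt_id hx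
  exact h1.sub_const (π/2)

lemma hh_zero : hh 0 = -(π/2) := by simp [hh]

lemma si_eq_hh (si : ℝ → ℝ)
    (hsi : ∀ x : ℝ, 0 < x →
      Tendsto (fun L => ∫ t in x..L, Real.sin t / t) atTop (nhds (-(si x))))
    {x : ℝ} (hx : 0 < x) : si x = hh x := by
  have h1 := hsi x hx
  have h2 : Tendsto (fun L => ∫ t in x..L, Real.sin t / t) atTop
      (nhds (π/2 - ∫ t in (0:ℝ)..x, Real.sin t / t)) := by
    have := dirichlet.sub (tendsto_const_nhds (x := ∫ t in (0:ℝ)..x, Real.sin t / t))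
    refine this.congr (fun L => ?_)
    exact intervalIntegral.integral_interval_sub_left (sinc_ii 0 L) (sinc_ii 0 x)
  have h3 := tendsto_nhds_unique h1 h2
  simp only [hh]
  linarith

theorem stmt6 (si : ℝ → ℝ)
    (hsi : ∀ x : ℝ, 0 < x →
      Tendsto (fun L => ∫ t in x..L, Real.sin t / t) atTop (nhds (-(si x))))
    (hsi0 : si 0 = π / 2)
    (a b L : ℝ) (ha : 0 < a) (hab : a ≤ b) (hL : 0 < L) :
    ∫ x in (0:ℝ)..L, si (a * x) * si (b * x)
      = π / (2 * b) + si (a * L) * si (b * L) * L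
        - ((b - a) / (2 * a * b)) * si ((b - a) * L)
        - ((b + a) / (2 * a * b)) * si ((b + a) * L)
        + (Real.cos (a * L) / a) * si (b * L)
        + (Real.cos (b * L) / b) * si (a * L) := by
  have hb : 0 < b := lt_of_lt_of_le ha hab
  set F : ℝ → ℝ := fun x => x * hh (a*x) * hh (b*x) + Real.cos (a*x)/a * hh (b*x)
    + Real.cos (b*x)/b * hh (a*x) - ((b+a)/(2*a*b)) * hh ((b+a)*x)
    - ((b-a)/(2*a*b)) * hh ((b-a)*x) with hFdef
  have hcc : ∀ c : ℝ, Continuous (fun x : ℝ => hh (c*x)) :=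
    fun c => hh_cont.comp (continuous_const.mul continuous_id)
  have hderivF : ∀ x ∈ Set.Ioo 0 L, HasDerivAt F (hh (a*x) * hh (b*x)) x := by
    intro x hx
    have hx0 : 0 < x := hx.1
    have dgen : ∀ c : ℝ, 0 < c → HasDerivAt (fun x => hh (c*x)) (Real.sin (c*x) / x) x := by
      intro c hc
      have := (hh_deriv (x := c*x) (by positivity)).comp x ((hasDerivAt_id x).const_mul c)
      refine this.congr_deriv (Eq.symm ?_)
      field_simp
    have dA := dgen a ha
    have dB := dgen b hb
    have hT1 : HasDerivAt (fun x => x * hh (a*x) * hh (b*x))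
        ((1 * hh (a*x) + x * (Real.sin (a*x) / x)) * hh (b*x)
          + x * hh (a*x) * (Real.sin (b*x) / x)) x :=
      ((hasDerivAt_id x).mul dA).mul dB
    have hT2 : HasDerivAt (fun x => Real.cos (a*x)/a * hh (b*x))
        ((-Real.sin (a*x) * (a*1)) / a * hh (b*x)
          + Real.cos (a*x)/a * (Real.sin (b*x) / x)) x :=
      (((Real.hasDerivAt_cos (a*x)).comp x ((hasDerivAt_id x).const_mul a)).div_const a).mul dB
    have hT3 : HasDerivAt (fun x => Real.cos (b*x)/b * hh (a*x))
        ((-Real.sin (b*x) * (b*1)) / b * hh (a*x)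
          + Real.cos (b*x)/b * (Real.sin (a*x) / x)) x :=
      (((Real.hasDerivAt_cos (b*x)).comp x ((hasDerivAt_id x).const_mul b)).div_const b).mul dA
    have hT4 : HasDerivAt (fun x => ((b+a)/(2*a*b)) * hh ((b+a)*x))
        (((b+a)/(2*a*b)) * (Real.sin ((b+a)*x) / x)) x :=
      (dgen (b+a) (by positivity)).const_mul _
    have hT5 : HasDerivAt (fun x => ((b-a)/(2*a*b)) * hh ((b-a)*x))
        (((b-a)/(2*a*b)) * (Real.sin ((b-a)*x) / x)) x := by
      rcases eq_or_lt_of_le hab with heq | hlt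
      · subst heq
        simp only [sub_self, zero_div, zero_mul]
        exact hasDerivAt_const x 0
      · exact (dgen (b-a) (sub_pos.2 hlt)).const_mul _
    have total := ((((hT1.add hT2).add hT3).sub hT4).sub hT5)
    rw [hFdef]
    refine total.congr_deriv (Eq.symm ?_)
    have e1 : Real.sin ((b+a)*x) = Real.sin (b*x) * Real.cos (a*x)
        + Real.cos (b*x) * Real.sin (a*x) := by rw [add_mul, Real.sin_add]
    have e2 : Real.sin ((b-a)*x) = Real.sin (b*x) * Real.cos (a*x)
        - Real.cos (b*x) * Real.sin (a*x) := by rw [sub_mul, Real.sin_sub]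
    rw [e1, e2]
    field_simp
    ring
  have hcontF : ContinuousOn F (Set.Icc 0 L) := by
    refine Continuous.continuousOn ?_
    refine (((((continuous_id.mul (hcc a)).mul (hcc b)).add
      (((Real.continuous_cos.comp (continuous_const.mul continuous_id)).div_const a).mul
        (hcc b))).add
      (((Real.continuous_cos.comp (continuous_const.mul continuous_id)).div_const b).mul
        (hcc a))).sub (continuous_const.mul (hcc (b+a)))).sub (continuous_const.mul (hcc (b-a)))
  have hGint : IntervalIntegrable (fun x => hh (a*x) * hh (b*x)) volume 0 L :=
    ((hcc a).mul (hcc b)).intervalIntegrable 0 L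
  have hFTC := intervalIntegral.integral_eq_sub_of_hasDerivAt_of_le hL.le hcontF hderivF hGint
  have hcongr : ∫ x in (0:ℝ)..L, si (a*x) * si (b*x)
      = ∫ x in (0:ℝ)..L, hh (a*x) * hh (b*x) := by
    refine intervalIntegral.integral_congr_ae (MeasureTheory.ae_of_all _ (fun x hx => ?_))
    rw [Set.uIoc_of_le hL.le] at hx
    have hx0 : 0 < x := hx.1
    rw [si_eq_hh si hsi (by positivity), si_eq_hh si hsi (by positivity)]
  rw [hcongr, hFTC]
  have hF0 : F 0 = -(π/(2*b)) := by
    simp only [hFdef, mul_zero, zero_mul, hh_zero, Real.cos_zero]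
    field_simp
    ring
  have ea : hh (a*L) = si (a*L) := (si_eq_hh si hsi (by positivity)).symm
  have eb : hh (b*L) = si (b*L) := (si_eq_hh si hsi (by positivity)).symm
  have eab : hh ((b+a)*L) = si ((b+a)*L) := (si_eq_hh si hsi (by positivity)).symm
  rw [hF0]
  simp only [hFdef]
  rw [ea, eb, eab]
  rcases eq_or_lt_of_le hab with heq | hlt
  · subst heq
    simp only [sub_self, zero_div, zero_mul]
    ring
  · have hba : 0 < b - a := sub_pos.2 hlt
    have eba : hh ((b-a)*L) = si ((b-a)*L) :=
      (si_eq_hh si hsi (by positivity)).symm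
    rw [eba]
    ring
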